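/- Let M be an irreducible D_s-module and let s divide t. Then M, viewed as a D_t-module by restriction, is a semisimple D_t-module (it is a sum of the irreducible D_t-modules Φ^{is}(P) for any irreducible D_t-submodule P of M). -/

import Mathlib

/-- A subspace `p` is stable under the (semilinear) action `g`; for
finite-dimensional difference modules this characterizes difference submodules. -/
def DiffStab {F V : Type*} [Field F] [AddCommGroup V] [Module F V]
    (g : V → V) (p : Submodule F V) : Prop :=
  ∀ x ∈ p, g x ∈ p

section Aux

variable {F V : Type*} [Field F] [AddCommGroup V] [Module F V]
variable (ψ : F ≃+* F) (A : V ≃+ V)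

lemma iterAdd (n : ℕ) (x y : V) :
    (⇑A)^[n] (x + y) = (⇑A)^[n] x + (⇑A)^[n] y := by
  induction n with
  | zero => simp
  | succ n ih => simp [Function.iterate_succ_apply', ih, map_add]

lemma iterZero (n : ℕ) : (⇑A)^[n] (0 : V) = 0 := by
  induction n with
  | zero => simp
  | succ n ih => simp [Function.iterate_succ_apply', ih]

variable (hA : ∀ (f : F) (v : V), A (f • v) = ψ f • A v)

include hA in
lemma iterSmul (n : ℕ) (f : F) (v : V) :
    (⇑A)^[n] (f • v) = (⇑ψ)^[n] f • (⇑A)^[n] v := by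
  induction n with
  | zero => simp
  | succ n ih => simp [Function.iterate_succ_apply', ih, hA]

/-- Image of a submodule under `A^[n]`, as a submodule. -/
def smap (n : ℕ) (p : Submodule F V) : Submodule F V where
  carrier := (⇑A)^[n] '' p
  zero_mem' := ⟨0, p.zero_mem, iterZero A n⟩
  add_mem' := by
    rintro x y ⟨a, ha, rfl⟩ ⟨b, hb, rfl⟩
    exact ⟨a + b, p.add_mem ha hb, iterAdd A n a b⟩
  smul_mem' := by
    rintro c x ⟨a, ha, rfl⟩
    refine ⟨(⇑ψ.symm)^[n] c • a, p.smul_mem _ ha, ?_⟩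
    rw [iterSmul ψ A hA]
    congr 1
    exact (Function.LeftInverse.iterate ψ.apply_symm_apply n) c

lemma mem_smap {n : ℕ} {p : Submodule F V} {x : V} :
    x ∈ smap ψ A hA n p ↔ ∃ y ∈ p, (⇑A)^[n] y = x := Iff.rfl

lemma smap_zero (p : Submodule F V) : smap ψ A hA 0 p = p := by
  ext x; simp [mem_smap]

end Aux

/-- Restriction of an irreducible module is semisimple: let `(V, A)` be a
finite-dimensional difference module over `D_s` (where `ψ = φ^s` and `A` is the
`ψ`-semilinear action of `Φ^s`) which is irreducible.  Then for any `k = t/s > 0`,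
the restriction `(V, A^k)` to `D_t` is a semisimple `D_t`-module: every
`D_t`-submodule of `V` has a `D_t`-stable complement (equivalently, `V` is a sum
of irreducible `D_t`-submodules, namely the translates `Φ^{is}(P)` of any
irreducible `D_t`-submodule `P`). -/
theorem restriction_of_irreducible_semisimple {F V : Type*} [Field F]
    [AddCommGroup V] [Module F V] [FiniteDimensional F V]
    (ψ : F ≃+* F) (A : V ≃+ V)
    (hA : ∀ (f : F) (v : V), A (f • v) = ψ f • A v)
    (hnt : Nontrivial V)
    (hirr : ∀ p : Submodule F V, DiffStab ⇑A p → p = ⊥ ∨ p = ⊤)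
    (k : ℕ) (hk : 0 < k) :
    ∀ p : Submodule F V, DiffStab ((⇑A)^[k]) p →
      ∃ q : Submodule F V, DiffStab ((⇑A)^[k]) q ∧ IsCompl p q := by
  intro p hp
  -- B = A⁻¹ is ψ⁻¹-semilinear
  set B : V ≃+ V := A.symm with hBdef
  have hB : ∀ (f : F) (v : V), B (f • v) = ψ.symm f • B v := by
    intro f v
    apply A.injective
    rw [hA, A.apply_symm_apply, RingEquiv.apply_symm_apply, A.apply_symm_apply]
  have hcomm : Function.Commute ⇑A ⇑B := by
    intro x
    simp [hBdef]
  -- commuting of iterates of A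
  have hAiter : ∀ (m n : ℕ) (x : V), (⇑A)^[m] ((⇑A)^[n] x) = (⇑A)^[n] ((⇑A)^[m] x) := by
    intro m n x
    rw [← Function.iterate_add_apply, ← Function.iterate_add_apply, Nat.add_comm]
  -- minimal nonzero A^k-stable submodule
  have hset : {m | ∃ r : Submodule F V, DiffStab ((⇑A)^[k]) r ∧ r ≠ ⊥ ∧
      Module.finrank F r = m}.Nonempty := by
    refine ⟨Module.finrank F (⊤ : Submodule F V), ⊤, fun x _ => trivial, ?_, rfl⟩
    intro h
    obtain ⟨v, hv⟩ := exists_ne (0 : V)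
    exact hv ((Submodule.mem_bot F).mp (h ▸ Submodule.mem_top))
  obtain ⟨P₀, hP₀st, hP₀ne, hP₀rk⟩ := Nat.sInf_mem hset
  have hP₀min : ∀ r : Submodule F V, DiffStab ((⇑A)^[k]) r → r ≠ ⊥ → r ≤ P₀ → r = P₀ := by
    intro r hrst hrne hle
    have h1 : sInf {m | ∃ r : Submodule F V, DiffStab ((⇑A)^[k]) r ∧ r ≠ ⊥ ∧
        Module.finrank F r = m} ≤ Module.finrank F r :=
      Nat.sInf_le ⟨r, hrst, hrne, rfl⟩
    exact Submodule.eq_of_le_of_finrank_le hle (hP₀rk ▸ h1)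
  -- the translates
  set S : ℕ → Submodule F V := fun n => smap ψ A hA n P₀ with hSdef
  -- each translate is A^k-stable
  have hSst : ∀ n, DiffStab ((⇑A)^[k]) (S n) := by
    rintro n x ⟨y, hy, rfl⟩
    exact ⟨(⇑A)^[k] y, hP₀st y hy, (hAiter k n y).symm⟩
  -- each translate is simple
  have hSsimple : ∀ n (q : Submodule F V), DiffStab ((⇑A)^[k]) q → q ≤ S n → q ≠ ⊥ →
      q = S n := by
    intro n q hqst hqle hqne
    have hBA : ∀ x : V, (⇑B)^[n] ((⇑A)^[n] x) = x :=
      Function.LeftInverse.iterate A.symm_apply_apply n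
    have hAB : ∀ x : V, (⇑A)^[n] ((⇑B)^[n] x) = x :=
      Function.LeftInverse.iterate A.apply_symm_apply n
    set q' : Submodule F V := smap ψ.symm B hB n q with hq'def
    have hq'le : q' ≤ P₀ := by
      rintro x ⟨y, hy, rfl⟩
      obtain ⟨z, hz, rfl⟩ := hqle hy
      rwa [hBA]
    have hq'st : DiffStab ((⇑A)^[k]) q' := by
      rintro x ⟨y, hy, rfl⟩
      refine ⟨(⇑A)^[k] y, hqst y hy, ?_⟩
      exact ((hcomm.iterate_iterate k n) y).symm
    have hq'ne : q' ≠ ⊥ := by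
      intro hbot
      apply hqne
      rw [Submodule.eq_bot_iff] at hbot ⊢
      intro x hx
      have := hbot ((⇑B)^[n] x) ⟨x, hx, rfl⟩
      have := congrArg ((⇑A)^[n]) this
      rwa [hAB, iterZero] at this
    have hq'eq : q' = P₀ := hP₀min q' hq'st hq'ne hq'le
    refine le_antisymm hqle ?_
    rintro x ⟨y, hy, rfl⟩
    rw [← hq'eq] at hy
    obtain ⟨z, hz, rfl⟩ := hy
    rwa [hAB]
  -- the sum of translates is everything
  have hTst : DiffStab ⇑A (⨆ n, S n) := by
    intro x hx
    refine Submodule.iSup_induction (motive := fun x => A x ∈ ⨆ n, S n) S hx ?_ ?_ ?_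
    · rintro n x ⟨y, hy, rfl⟩
      refine le_iSup S (n + 1) ⟨y, hy, ?_⟩
      rw [Function.iterate_succ_apply']
    · simp
    · intro a b ha hb
      rw [map_add]
      exact Submodule.add_mem _ ha hb
  have hT : (⨆ n, S n) = ⊤ := by
    rcases hirr (⨆ n, S n) hTst with h | h
    · exfalso
      apply hP₀ne
      have h0 : S 0 ≤ ⊥ := h ▸ le_iSup S 0
      rw [hSdef] at h0
      simpa [smap_zero, le_bot_iff] using h0
    · exact h
  -- semisimplicity argument: take a stable q with p ⊓ q = ⊥ of maximal dimension
  have hbdd : BddAbove {d | ∃ q : Submodule F V, DiffStab ((⇑A)^[k]) q ∧ p ⊓ q = ⊥ ∧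
      Module.finrank F q = d} := by
    refine ⟨Module.finrank F V, ?_⟩
    rintro d ⟨q, _, _, rfl⟩
    exact Submodule.finrank_le q
  have hne : {d | ∃ q : Submodule F V, DiffStab ((⇑A)^[k]) q ∧ p ⊓ q = ⊥ ∧
      Module.finrank F q = d}.Nonempty := by
    refine ⟨0, ⊥, ?_, inf_bot_eq p, ?_⟩
    · intro x hx
      simp only [Submodule.mem_bot] at hx
      simp [hx, iterZero]
    · simp
  obtain ⟨q, hqst, hqinf, hqrk⟩ := Nat.sSup_mem hne hbdd
  refine ⟨q, hqst, ?_⟩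
  rw [isCompl_iff, disjoint_iff, codisjoint_iff]
  refine ⟨hqinf, ?_⟩
  by_contra hsup
  -- find a translate not inside p ⊔ q
  have : ∃ n, ¬ S n ≤ p ⊔ q := by
    by_contra h
    push_neg at h
    exact hsup (top_le_iff.mp (hT ▸ iSup_le h))
  obtain ⟨n, hn⟩ := this
  have hSint : S n ⊓ (p ⊔ q) = ⊥ := by
    by_contra hb
    have := hSsimple n (S n ⊓ (p ⊔ q)) ?_ inf_le_left hb
    · exact hn (this ▸ inf_le_right)
    · intro x hx
      refine ⟨hSst n x hx.1, ?_⟩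
      obtain ⟨a, ha, b, hb, rfl⟩ := Submodule.mem_sup.mp hx.2
      rw [iterAdd]
      exact Submodule.add_mem _ (Submodule.mem_sup_left (hp a ha))
        (Submodule.mem_sup_right (hqst b hb))
  -- enlarge q
  have hq'st : DiffStab ((⇑A)^[k]) (q ⊔ S n) := by
    intro x hx
    obtain ⟨a, ha, b, hb, rfl⟩ := Submodule.mem_sup.mp hx
    rw [iterAdd]
    exact Submodule.add_mem _ (Submodule.mem_sup_left (hqst a ha))
      (Submodule.mem_sup_right (hSst n b hb))
  have hq'inf : p ⊓ (q ⊔ S n) = ⊥ := by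
    rw [Submodule.eq_bot_iff]
    rintro x ⟨hxp, hxqs⟩
    obtain ⟨a, ha, b, hb, rfl⟩ := Submodule.mem_sup.mp hxqs
    have hbmem : b ∈ S n ⊓ (p ⊔ q) := by
      refine ⟨hb, ?_⟩
      rw [(add_sub_cancel_left a b).symm]
      exact Submodule.sub_mem _ (Submodule.mem_sup_left hxp) (Submodule.mem_sup_right ha)
    have hb0 : b = 0 := by rwa [hSint, Submodule.mem_bot] at hbmem
    subst hb0
    have : a + 0 ∈ p ⊓ q := ⟨hxp, by simpa using ha⟩
    rwa [hqinf, Submodule.mem_bot] at this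
  -- contradiction with maximality
  have hlt : q < q ⊔ S n := by
    refine lt_of_le_of_ne le_sup_left ?_
    intro h
    exact hn (le_trans (h ▸ le_sup_right) le_sup_right)
  have h1 : Module.finrank F q < Module.finrank F ↥(q ⊔ S n) :=
    Submodule.finrank_lt_finrank_of_lt hlt
  have h2 : Module.finrank F ↥(q ⊔ S n) ≤ sSup {d | ∃ q : Submodule F V,
      DiffStab ((⇑A)^[k]) q ∧ p ⊓ q = ⊥ ∧ Module.finrank F q = d} :=
    le_csSup hbdd ⟨q ⊔ S n, hq'st, hq'inf, rfl⟩
  omega
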